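/- Let $r\ge 2$ be an integer, $(w_1,\dots,w_n)$ positive reals with sum $W$, and let $Y$ be the size-biased weight variable ($\mathbb{P}[Y\le a]=\sum_{u:w_u\le a}w_u/W$). Let $\psi_H>0$ be such that $\mathbb{P}[y\le Y<\psi_H] < 2W^{r-1}/y^{2r-1}$ for all $0<y<\psi_H$. Then for any integer $\vartheta$ with $r\le \vartheta\le 2r-1$ and any $a>0$, $\sum_{v: a\le w_v<\psi_H} w_v^{\vartheta} \le 4r\,W^r\,a^{\vartheta-2r}$. -/

import Mathlib

set_option maxHeartbeats 4000000


open Finset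

/-- Proposition 4.3, second part: if the size-biased tail satisfies
`P[y ≤ Y < ψH] < 2 W^(r-1) / y^(2r-1)` for all `0 < y < ψH`, then for every integer
`ϑ` with `r ≤ ϑ ≤ 2r - 1` and every `a > 0`,
`∑_{a ≤ w_v < ψH} w_v^ϑ ≤ 4 r W^r a^(ϑ - 2r)`. -/
theorem restricted_moment_upper {n : ℕ} (w : Fin n → ℝ) (hpos : ∀ v, 0 < w v)
    (W : ℝ) (hW : W = ∑ v, w v) (hWpos : 0 < W)
    (r : ℕ) (hr : 2 ≤ r) (ψH : ℝ) (hψ : 0 < ψH)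
    (htail : ∀ y : ℝ, 0 < y → y < ψH →
      W⁻¹ * ∑ v ∈ univ.filter (fun v => y ≤ w v ∧ w v < ψH), w v <
        2 * W ^ (r - 1) / y ^ (2 * r - 1))
    (ϑ : ℕ) (hϑ₁ : r ≤ ϑ) (hϑ₂ : ϑ ≤ 2 * r - 1) (a : ℝ) (ha : 0 < a) :
    ∑ v ∈ univ.filter (fun v => a ≤ w v ∧ w v < ψH), (w v) ^ ϑ ≤
      4 * r * W ^ r * a ^ ((ϑ : ℤ) - 2 * r) := by
  have hrR : (2:ℝ) ≤ (r:ℝ) := by exact_mod_cast hr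
  have hϑ2 : 2 ≤ ϑ := le_trans hr hϑ₁
  have hϑR : ((ϑ:ℝ)) ≤ 2*(r:ℝ) - 1 := by
    have : (ϑ:ℝ) ≤ ((2*r-1 : ℕ) : ℝ) := by exact_mod_cast hϑ₂
    have h2 : ((2*r-1 : ℕ) : ℝ) = 2*(r:ℝ) - 1 := by
      push_cast [Nat.cast_sub (by omega : 1 ≤ 2*r)]; ring
    linarith [this, h2.le]
  have hRHSpos : 0 < 4 * (r:ℝ) * W ^ r * a ^ ((ϑ : ℤ) - 2 * r) := by positivity
  set S := univ.filter (fun v : Fin n => a ≤ w v ∧ w v < ψH) with hS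
  by_cases hcase : ψH ≤ a
  · have hSe : S = ∅ := by
      ext v
      simp only [hS, mem_filter, mem_univ, true_and, notMem_empty, iff_false, not_and, not_lt]
      intro h1; linarith
    rw [hSe]
    simpa using hRHSpos.le
  push_neg at hcase
  -- notation
  set m : ℕ := ϑ - 2 with hm
  have hm2 : m + 2 = ϑ := by omega
  have hmR : (m : ℝ) + 1 = (ϑ:ℝ) - 1 := by
    have : ((m + 1 : ℕ) : ℝ) = (ϑ:ℝ) - 1 := by
      rw [hm]; push_cast [Nat.cast_sub hϑ2]; ring
    push_cast at this; linarith
  set k : ℤ := (ϑ : ℤ) - 2 * r with hk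
  have hkneg : k ≤ -1 := by omega
  have hkR : ((k:ℝ)) = (ϑ:ℝ) - 2*(r:ℝ) := by push_cast [hk]; ring
  set f : Fin n → ℝ → ℝ := fun v x => (Set.Iic (w v)).indicator (fun x => x ^ m * w v) x with hf
  have hzero_not : ∀ b c : ℝ, 0 < b → 0 < c → (0:ℝ) ∉ Set.uIcc b c := by
    intro b c hb hc h
    rcases Set.mem_uIcc.mp h with ⟨h1, _⟩ | ⟨h1, _⟩ <;> linarith
  -- integrability of f v on any subinterval of positives
  have hint : ∀ (v : Fin n) (b c : ℝ), IntervalIntegrable (f v) MeasureTheory.volume b c := by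
    intro v b c
    have hcont : IntervalIntegrable (fun x : ℝ => x ^ m * w v) MeasureTheory.volume b c :=
      (Continuous.intervalIntegrable (by continuity) b c)
    rw [intervalIntegrable_iff] at hcont ⊢
    exact hcont.indicator measurableSet_Iic
  -- tail bound: for 0 < x, sum over {x ≤ w v < ψH} of w v ≤ 2 W^r / x^(2r-1)
  have htail' : ∀ x : ℝ, 0 < x →
      (∑ v ∈ univ.filter (fun v => x ≤ w v ∧ w v < ψH), w v) ≤ 2 * W ^ r / x ^ (2*r-1) := by
    intro x hx
    rcases lt_or_ge x ψH with hxψ | hxψ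
    · have h := htail x hx hxψ
      have hWr : W ^ r = W ^ (r-1) * W := by
        rw [← pow_succ]; congr 1; omega
      rw [div_eq_mul_inv] at h ⊢
      have := mul_lt_mul_of_pos_right h hWpos
      calc (∑ v ∈ univ.filter (fun v => x ≤ w v ∧ w v < ψH), w v)
          = W⁻¹ * (∑ v ∈ univ.filter (fun v => x ≤ w v ∧ w v < ψH), w v) * W := by
            field_simp
        _ ≤ 2 * W ^ (r-1) * (x ^ (2*r-1))⁻¹ * W := by
            nlinarith [this]
        _ = 2 * W ^ r * (x ^ (2*r-1))⁻¹ := by rw [hWr]; ring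
    · have he : univ.filter (fun v : Fin n => x ≤ w v ∧ w v < ψH) = ∅ := by
        ext v
        simp only [mem_filter, mem_univ, true_and, notMem_empty, iff_false, not_and, not_lt]
        intro h1; linarith
      rw [he]
      simp only [sum_empty]
      positivity
  -- per element: w v ^ ϑ decomposition and integral bound
  have hTa : (∑ v ∈ S, w v) ≤ 2 * W ^ r / a ^ (2*r-1) := htail' a ha
  -- step A : per element integral inequality
  have hstepA : ∀ v ∈ S, w v * ((w v ^ (m+1) - a ^ (m+1)) / ((m:ℝ)+1)) ≤
      ∫ x in a..ψH, f v x := by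
    intro v hv
    have hvw : a ≤ w v ∧ w v < ψH := by simpa [hS] using hv
    have split : (∫ x in a..ψH, f v x) =
        (∫ x in a..(w v), f v x) + ∫ x in (w v)..ψH, f v x :=
      (intervalIntegral.integral_add_adjacent_intervals (hint v a (w v)) (hint v (w v) ψH)).symm
    have e1 : (∫ x in a..(w v), f v x) = ∫ x in a..(w v), x ^ m * w v := by
      apply intervalIntegral.integral_congr
      intro x hx
      rw [Set.uIcc_of_le hvw.1] at hx
      exact Set.indicator_of_mem (hx.2 : x ∈ Set.Iic (w v)) _
    have e1' : (∫ x in a..(w v), x ^ m * w v) =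
        ((w v ^ (m+1) - a ^ (m+1)) / ((m:ℝ)+1)) * w v := by
      rw [intervalIntegral.integral_mul_const, integral_pow]
    have e2 : 0 ≤ ∫ x in (w v)..ψH, f v x := by
      apply intervalIntegral.integral_nonneg hvw.2.le
      intro x hx
      rw [hf]
      simp only [Set.indicator_apply]
      split_ifs with h
      · have hx0 : (0:ℝ) ≤ x := le_trans (hpos v).le hx.1
        exact mul_nonneg (pow_nonneg hx0 m) (hpos v).le
      · exact le_refl 0
    rw [split, e1, e1']
    linarith
  -- sum of integrals = integral of sum, and pointwise bound
  have hsum : (∑ v ∈ S, ∫ x in a..ψH, f v x) = ∫ x in a..ψH, ∑ v ∈ S, f v x :=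
    (intervalIntegral.integral_finset_sum (s := S) (fun v _ => hint v a ψH)).symm
  have hptwise : ∀ x ∈ Set.Icc a ψH, (∑ v ∈ S, f v x) ≤ 2 * W ^ r * x ^ (k - 1) := by
    intro x hx
    have hx0 : 0 < x := lt_of_lt_of_le ha hx.1
    have hTS : univ.filter (fun v => x ≤ w v ∧ w v < ψH) = S.filter (fun v => x ≤ w v) := by
      ext v
      simp only [hS, mem_filter, mem_univ, true_and]
      constructor
      · rintro ⟨h1, h2⟩; exact ⟨⟨le_trans hx.1 h1, h2⟩, h1⟩
      · rintro ⟨⟨_, h2⟩, h3⟩; exact ⟨h3, h2⟩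
    have hsum_eq : (∑ v ∈ S, f v x) =
        x ^ m * ∑ v ∈ univ.filter (fun v => x ≤ w v ∧ w v < ψH), w v := by
      calc (∑ v ∈ S, f v x) = ∑ v ∈ S, if x ≤ w v then x ^ m * w v else 0 := by
            apply Finset.sum_congr rfl
            intro v _
            simp [hf, Set.indicator_apply, Set.mem_Iic]
        _ = ∑ v ∈ S.filter (fun v => x ≤ w v), x ^ m * w v := (Finset.sum_filter _ _).symm
        _ = x ^ m * ∑ v ∈ S.filter (fun v => x ≤ w v), w v := by rw [Finset.mul_sum]
        _ = x ^ m * ∑ v ∈ univ.filter (fun v => x ≤ w v ∧ w v < ψH), w v := by rw [hTS]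
    rw [hsum_eq]
    have hT := htail' x hx0
    have hxm : (0:ℝ) ≤ x ^ m := pow_nonneg hx0.le m
    calc x ^ m * ∑ v ∈ univ.filter (fun v => x ≤ w v ∧ w v < ψH), w v
        ≤ x ^ m * (2 * W ^ r / x ^ (2*r-1)) := by
          exact mul_le_mul_of_nonneg_left hT hxm
      _ = 2 * W ^ r * (x ^ m / x ^ (2*r-1)) := by ring
      _ = 2 * W ^ r * x ^ (k - 1) := by
          congr 1
          rw [← zpow_natCast x m, ← zpow_natCast x (2*r-1), ← zpow_sub₀ hx0.ne']
          congr 1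
          rw [hk, hm]
          push_cast [Nat.cast_sub (by omega : 2 ≤ ϑ), Nat.cast_sub (by omega : 1 ≤ 2*r)]
          omega
  -- integral comparison
  have hintS : IntervalIntegrable (fun x => ∑ v ∈ S, f v x) MeasureTheory.volume a ψH := by
    have h := IntervalIntegrable.sum (μ := MeasureTheory.volume) (a := a) (b := ψH) S
      (fun v (_ : v ∈ S) => hint v a ψH)
    have he : (∑ v ∈ S, f v) = fun x => ∑ v ∈ S, f v x := by
      funext x
      exact Finset.sum_apply x S f
    rwa [he] at h
  have hintR : IntervalIntegrable (fun x : ℝ => 2 * W ^ r * x ^ (k-1)) MeasureTheory.volume a ψH :=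
    (intervalIntegral.intervalIntegrable_zpow (Or.inr (hzero_not a ψH ha hψ))).const_mul _
  have hmono : (∫ x in a..ψH, ∑ v ∈ S, f v x) ≤ ∫ x in a..ψH, 2 * W ^ r * x ^ (k-1) :=
    intervalIntegral.integral_mono_on hcase.le hintS hintR hptwise
  have hIR : (∫ x in a..ψH, 2 * W ^ r * x ^ (k-1)) =
      2 * W ^ r * ((ψH ^ k - a ^ k) / (k:ℝ)) := by
    rw [intervalIntegral.integral_const_mul, integral_zpow (Or.inr ⟨by omega, hzero_not a ψH ha hψ⟩)]
    norm_num
  -- bound the integral value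
  have hIRb : ((ψH ^ k - a ^ k) / (k:ℝ)) ≤ a ^ k / (2*(r:ℝ) - (ϑ:ℝ)) := by
    have hd : (0:ℝ) < 2*(r:ℝ) - (ϑ:ℝ) := by
      have : (k:ℝ) ≤ -1 := by exact_mod_cast hkneg
      linarith [hkR]
    have hkk : (k:ℝ) = -(2*(r:ℝ) - (ϑ:ℝ)) := by rw [hkR]; ring
    have hψk : (0:ℝ) < ψH ^ k := zpow_pos hψ k
    rw [hkk, div_neg, ← neg_div, neg_sub]
    gcongr
    linarith
  -- main decomposition
  have hdecomp : (∑ v ∈ S, (w v) ^ ϑ) =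
      a ^ (m+1) * (∑ v ∈ S, w v) +
      ((m:ℝ)+1) * ∑ v ∈ S, w v * ((w v ^ (m+1) - a ^ (m+1)) / ((m:ℝ)+1)) := by
    rw [Finset.mul_sum, Finset.mul_sum, ← Finset.sum_add_distrib]
    apply Finset.sum_congr rfl
    intro v _
    have hm1 : ((m:ℝ)+1) ≠ 0 := by positivity
    field_simp
    rw [← hm2]
    ring
  -- combine
  have hQ : (∑ v ∈ S, w v * ((w v ^ (m+1) - a ^ (m+1)) / ((m:ℝ)+1))) ≤
      2 * W ^ r * ((ψH ^ k - a ^ k) / (k:ℝ)) := by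
    calc (∑ v ∈ S, w v * ((w v ^ (m+1) - a ^ (m+1)) / ((m:ℝ)+1)))
        ≤ ∑ v ∈ S, ∫ x in a..ψH, f v x := Finset.sum_le_sum hstepA
      _ = ∫ x in a..ψH, ∑ v ∈ S, f v x := hsum
      _ ≤ ∫ x in a..ψH, 2 * W ^ r * x ^ (k-1) := hmono
      _ = 2 * W ^ r * ((ψH ^ k - a ^ k) / (k:ℝ)) := hIR
  -- final arithmetic
  have hak : 0 < a ^ k := zpow_pos ha k
  have hWr : (0:ℝ) < W ^ r := pow_pos hWpos r
  have hfirst : a ^ (m+1) * (∑ v ∈ S, w v) ≤ 2 * W ^ r * a ^ k := by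
    have ham : (0:ℝ) < a ^ (m+1) := pow_pos ha _
    calc a ^ (m+1) * (∑ v ∈ S, w v) ≤ a ^ (m+1) * (2 * W ^ r / a ^ (2*r-1)) :=
          mul_le_mul_of_nonneg_left hTa ham.le
      _ = 2 * W ^ r * (a ^ (m+1) / a ^ (2*r-1)) := by ring
      _ = 2 * W ^ r * a ^ k := by
          congr 1
          rw [← zpow_natCast a (m+1), ← zpow_natCast a (2*r-1), ← zpow_sub₀ ha.ne']
          congr 1
          rw [hk, hm]
          push_cast [Nat.cast_sub (by omega : 2 ≤ ϑ), Nat.cast_sub (by omega : 1 ≤ 2*r)]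
          omega
  have hd : (0:ℝ) < 2*(r:ℝ) - (ϑ:ℝ) := by
    have : (k:ℝ) ≤ -1 := by exact_mod_cast hkneg
    linarith [hkR]
  have hd1 : (1:ℝ) ≤ 2*(r:ℝ) - (ϑ:ℝ) := by linarith
  have hm1pos : (0:ℝ) ≤ (m:ℝ)+1 := by positivity
  have hsecond : ((m:ℝ)+1) * (2 * W ^ r * ((ψH ^ k - a ^ k) / (k:ℝ))) ≤
      ((ϑ:ℝ)-1) * (2 * W ^ r * (a ^ k / (2*(r:ℝ) - (ϑ:ℝ)))) := by
    rw [hmR]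
    apply mul_le_mul_of_nonneg_left _ (by linarith [hmR] : (0:ℝ) ≤ (ϑ:ℝ)-1)
    exact mul_le_mul_of_nonneg_left hIRb (by positivity)
  have hfin : 2 * W ^ r * a ^ k + ((ϑ:ℝ)-1) * (2 * W ^ r * (a ^ k / (2*(r:ℝ) - (ϑ:ℝ)))) ≤
      4 * (r:ℝ) * W ^ r * a ^ k := by
    have hdivle : a ^ k / (2*(r:ℝ) - (ϑ:ℝ)) ≤ a ^ k := div_le_self hak.le hd1
    have hϑ1 : (0:ℝ) ≤ (ϑ:ℝ) - 1 := by
      have : (2:ℝ) ≤ (ϑ:ℝ) := by exact_mod_cast hϑ2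
      linarith
    nlinarith [mul_le_mul_of_nonneg_left hdivle hϑ1, mul_pos hWr hak]
  calc (∑ v ∈ S, (w v) ^ ϑ)
      = a ^ (m+1) * (∑ v ∈ S, w v) +
        ((m:ℝ)+1) * ∑ v ∈ S, w v * ((w v ^ (m+1) - a ^ (m+1)) / ((m:ℝ)+1)) := hdecomp
    _ ≤ 2 * W ^ r * a ^ k + ((ϑ:ℝ)-1) * (2 * W ^ r * (a ^ k / (2*(r:ℝ) - (ϑ:ℝ)))) := by
        have := mul_le_mul_of_nonneg_left hQ hm1pos
        calc a ^ (m+1) * (∑ v ∈ S, w v) +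
              ((m:ℝ)+1) * ∑ v ∈ S, w v * ((w v ^ (m+1) - a ^ (m+1)) / ((m:ℝ)+1))
            ≤ 2 * W ^ r * a ^ k + ((m:ℝ)+1) * (2 * W ^ r * ((ψH ^ k - a ^ k) / (k:ℝ))) := by
              exact add_le_add hfirst this
          _ ≤ 2 * W ^ r * a ^ k + ((ϑ:ℝ)-1) * (2 * W ^ r * (a ^ k / (2*(r:ℝ) - (ϑ:ℝ)))) :=
              add_le_add_right hsecond _
    _ ≤ 4 * (r:ℝ) * W ^ r * a ^ k := hfin
    _ = 4 * (r:ℕ) * W ^ r * a ^ ((ϑ : ℤ) - 2 * r) := by rw [hk]
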